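/- For distinct indices i, j, k in {1,2,3} and natural numbers n, q, the identity E_{ji}⁻¹ · E_{ik}^q · E_{ki} = E_{ik}^q · E_{ki} · (E_{ji}⁻¹ · E_{jk}⁻¹)^q · E_{ji}⁻¹ holds in SL(3,ℤ). -/

import Mathlib

/-- The elementary matrix `E i j` (identity plus a 1 in position `(i,j)`),
as an element of `SL(3, ℤ)`. -/
def Esl (i j : Fin 3) (h : i ≠ j) : Matrix.SpecialLinearGroup (Fin 3) ℤ :=
  ⟨Matrix.transvection i j 1, Matrix.det_transvection_of_ne i j h 1⟩

open Matrix in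
def Tsl (i j : Fin 3) (h : i ≠ j) (c : ℤ) : Matrix.SpecialLinearGroup (Fin 3) ℤ :=
  ⟨Matrix.transvection i j c, Matrix.det_transvection_of_ne i j h c⟩

lemma Tsl_mul (i j : Fin 3) (h : i ≠ j) (c d : ℤ) :
    Tsl i j h c * Tsl i j h d = Tsl i j h (c + d) := by
  apply Subtype.ext
  rw [Matrix.SpecialLinearGroup.coe_mul]
  simp [Tsl, Matrix.transvection_mul_transvection_same i j h]

lemma Tsl_zero (i j : Fin 3) (h : i ≠ j) : Tsl i j h 0 = 1 := by
  apply Subtype.ext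
  simp [Tsl, Matrix.transvection]

lemma Esl_eq (i j : Fin 3) (h : i ≠ j) : Esl i j h = Tsl i j h 1 := rfl

lemma Esl_inv (i j : Fin 3) (h : i ≠ j) : (Esl i j h)⁻¹ = Tsl i j h (-1) := by
  rw [eq_comm, eq_inv_iff_mul_eq_one, Esl_eq, Tsl_mul]
  simpa using Tsl_zero i j h

lemma Esl_pow (i j : Fin 3) (h : i ≠ j) (q : ℕ) :
    (Esl i j h) ^ q = Tsl i j h (q : ℤ) := by
  induction q with
  | zero => simpa using (Tsl_zero i j h).symm
  | succ n ih => rw [pow_succ, ih, Esl_eq, Tsl_mul]; push_cast; ring_nf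

open Matrix in
lemma pow_mul_transvection (j i k : Fin 3) (hji : j ≠ i) (hjk : j ≠ k)
    (a b : ℤ) (q : ℕ) :
    (Matrix.transvection j i a * Matrix.transvection j k b) ^ q =
      1 + single j i ((q : ℤ) * a) + single j k ((q : ℤ) * b) := by
  induction q with
  | zero => simp
  | succ n ih =>
    rw [pow_succ, ih, Matrix.transvection, Matrix.transvection]
    rw [show (single j i a : Matrix (Fin 3) (Fin 3) ℤ) =
      single j i (1 * a) by ring_nf]
    rw [show (single j k b : Matrix (Fin 3) (Fin 3) ℤ) =
      single j k (1 * b) by ring_nf]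
    simp only [mul_add, add_mul, one_mul, mul_one,
      Matrix.single_mul_single_same,
      Matrix.single_mul_single_of_ne _ _ _ _ hji.symm,
      Matrix.single_mul_single_of_ne _ _ _ _ hjk.symm,
      add_zero, zero_add]
    push_cast
    rw [add_mul, add_mul, one_mul, Matrix.single_add, Matrix.single_add, one_mul]
    abel

theorem global_first_stage (i j k : Fin 3)
    (hji : j ≠ i) (hik : i ≠ k) (hki : k ≠ i) (hjk : j ≠ k) (n q : ℕ) :
    (Esl j i hji)⁻¹ * (Esl i k hik) ^ q * Esl k i hki =
      (Esl i k hik) ^ q * Esl k i hki *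
        ((Esl j i hji)⁻¹ * (Esl j k hjk)⁻¹) ^ q * (Esl j i hji)⁻¹ := by
  rw [Esl_inv, Esl_inv, Esl_pow, Esl_eq]
  apply Subtype.ext
  have hpow : ((Tsl j i hji (-1) * Tsl j k hjk (-1)) ^ q :
      Matrix.SpecialLinearGroup (Fin 3) ℤ).val =
      (Matrix.transvection j i (-1) * Matrix.transvection j k (-1)) ^ q := by
    rw [Matrix.SpecialLinearGroup.coe_pow, Matrix.SpecialLinearGroup.coe_mul]
    simp [Tsl]
  simp only [Matrix.SpecialLinearGroup.coe_mul, hpow,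
    pow_mul_transvection j i k hji hjk]
  simp only [Tsl]
  simp only [Matrix.transvection]
  have hij : i ≠ j := hji.symm
  have hkj : k ≠ j := hjk.symm
  have hik' := hik
  simp only [mul_add, add_mul, mul_one, one_mul,
    Matrix.single_mul_single_same,
    Matrix.single_mul_single_of_ne _ _ _ _ hij,
    Matrix.single_mul_single_of_ne _ _ _ _ hji,
    Matrix.single_mul_single_of_ne _ _ _ _ hik,
    Matrix.single_mul_single_of_ne _ _ _ _ hki,
    Matrix.single_mul_single_of_ne _ _ _ _ hjk,
    Matrix.single_mul_single_of_ne _ _ _ _ hkj,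
    add_zero, zero_add, mul_neg, mul_one, neg_neg, one_mul]
  have harg : (-1 : ℤ) * (q : ℤ) = -(q:ℤ) := by ring
  simp only [neg_one_mul, smul_eq_mul, mul_one, one_mul]
  abel
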